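/- For each n ≥ 1, let K_n = ∑_{ℓ=1}^∞ B_{n,ℓ}, where for each fixed n the family (B_{n,ℓ})_{ℓ≥1} consists of independent random variables taking values in {0,1}, and set Φ_n = E[K_n]. Assume that 0 < Φ_n < ∞ for all n, that Φ_n → ∞ as n → ∞, and that K_n/Φ_n → 1 almost surely. Then for every real constant c, Φ_n / ((K_n + c) ∨ 1) → 1 as n → ∞ both almost surely and in L^p for every p ≥ 1. -/

import Mathlib

open MeasureTheory ProbabilityTheory Filter

lemma occ_tsum_eq_toReal {Y : ℕ → ℝ} (hnn : ∀ l, 0 ≤ Y l) :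
    ∑' l, Y l = (∑' l, ENNReal.ofReal (Y l)).toReal := by
  by_cases h : Summable Y
  · rw [← ENNReal.ofReal_tsum_of_nonneg hnn h,
      ENNReal.toReal_ofReal (tsum_nonneg hnn)]
  · rw [tsum_eq_zero_of_not_summable h]
    have htop : ∑' l, ENNReal.ofReal (Y l) = ⊤ := by
      by_contra hne
      have hs : Summable fun l => (Y l).toNNReal := by
        rw [← ENNReal.tsum_coe_ne_top_iff_summable]
        exact hne
      have : Summable Y := by
        have := (NNReal.summable_coe).2 hs
        refine this.congr fun l => ?_
        exact Real.coe_toNNReal _ (hnn l)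
      exact h this
    simp [htop]

lemma occ_summable_of_ne_top {Y : ℕ → ℝ} (hnn : ∀ l, 0 ≤ Y l)
    (h : ∑' l, ENNReal.ofReal (Y l) ≠ ⊤) : Summable Y := by
  have hs : Summable fun l => (Y l).toNNReal := by
    rw [← ENNReal.tsum_coe_ne_top_iff_summable]
    exact h
  have := (NNReal.summable_coe).2 hs
  exact this.congr fun l => Real.coe_toNNReal _ (hnn l)

lemma occ_integral_prod {Ω : Type*} [MeasurableSpace Ω] (P : Measure Ω)
    [IsProbabilityMeasure P] (Y : ℕ → Ω → ℝ)
    (hind : iIndepFun Y P)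
    (hmeas : ∀ l, Measurable (Y l)) (hint : ∀ l, Integrable (Y l) P) (s : Finset ℕ) :
    (Integrable (fun ω => ∏ l ∈ s, Y l ω) P) ∧
      ∫ ω, ∏ l ∈ s, Y l ω ∂P = ∏ l ∈ s, ∫ ω, Y l ω ∂P := by
  classical
  induction s using Finset.induction_on with
  | empty => simp [integrable_const]
  | insert i s hi ih =>
    have heq : (∏ j ∈ s, Y j) = fun ω => ∏ l ∈ s, Y l ω := by
      funext ω; simp
    have hIF : IndepFun (Y i) (fun ω => ∏ l ∈ s, Y l ω) P := by
      rw [← heq]; exact (hind.indepFun_finsetProd_of_notMem hmeas hi).symm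
    have hint2 : Integrable (fun ω => Y i ω * ∏ l ∈ s, Y l ω) P :=
      hIF.integrable_mul (hint i) ih.1
    constructor
    · refine hint2.congr (ae_of_all _ fun ω => ?_)
      simp [Finset.prod_insert hi]
    · have := hIF.integral_fun_mul_eq_mul_integral (hint i).1 ih.1.1
      calc ∫ ω, ∏ l ∈ insert i s, Y l ω ∂P
          = ∫ ω, Y i ω * ∏ l ∈ s, Y l ω ∂P := by
            congr 1; funext ω; rw [Finset.prod_insert hi]
        _ = (∫ ω, Y i ω ∂P) * ∫ ω, ∏ l ∈ s, Y l ω ∂P := this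
        _ = ∏ l ∈ insert i s, ∫ ω, Y l ω ∂P := by
            rw [Finset.prod_insert hi, ih.2]

lemma occ_tail_bound {Ω : Type*} [MeasurableSpace Ω] (P : Measure Ω)
    [IsProbabilityMeasure P] (Y : ℕ → Ω → ℝ) (hmeas : ∀ l, Measurable (Y l))
    (h01 : ∀ l ω, Y l ω = 0 ∨ Y l ω = 1)
    (hind : iIndepFun Y P)
    (hsum : Summable fun l => ∫ ω, Y l ω ∂P) (Φ : ℝ)
    (hΦ : Φ = ∑' l, ∫ ω, Y l ω ∂P) :
    (P {ω | (∑' l, Y l ω) ≤ Φ / 2}).toReal ≤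
      Real.exp (-((1 - Real.log 2) / 2) * Φ) := by
  have hnn : ∀ l ω, 0 ≤ Y l ω := by
    intro l ω; rcases h01 l ω with h | h <;> rw [h] <;> norm_num
  have hle1 : ∀ l ω, Y l ω ≤ 1 := by
    intro l ω; rcases h01 l ω with h | h <;> rw [h] <;> norm_num
  have hYint : ∀ l, Integrable (Y l) P := by
    intro l
    refine (integrable_const (1 : ℝ)).mono' (hmeas l).aestronglyMeasurable ?_
    exact ae_of_all _ fun ω => by
      rw [Real.norm_eq_abs, abs_of_nonneg (hnn l ω)]; exact hle1 l ω
  set g : ℕ → ℝ := fun l => ∫ ω, Y l ω ∂P with hg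
  have hgnn : ∀ l, 0 ≤ g l := fun l => integral_nonneg (fun ω => hnn l ω)
  have hg1 : ∀ l, g l ≤ 1 := by
    intro l
    calc g l ≤ ∫ _, (1 : ℝ) ∂P := integral_mono (hYint l) (integrable_const 1)
          fun ω => hle1 l ω
      _ = 1 := by simp
  -- the random variables Z l = 1 - Y l / 2
  set Z : ℕ → Ω → ℝ := fun l ω => 1 - Y l ω / 2 with hZ
  have hZmeas : ∀ l, Measurable (Z l) :=
    fun l => measurable_const.sub ((hmeas l).div_const 2)
  have hZint : ∀ l, Integrable (Z l) P :=
    fun l => (integrable_const 1).sub ((hYint l).div_const 2)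
  have hZind : iIndepFun Z P := by
    have := hind.comp (fun _ (x : ℝ) => 1 - x / 2)
      (fun _ => measurable_const.sub (measurable_id.div_const 2))
    exact this
  have hEZ : ∀ l, ∫ ω, Z l ω ∂P = 1 - g l / 2 := by
    intro l
    rw [hZ]
    simp only
    rw [integral_sub (integrable_const 1) ((hYint l).div_const 2),
      integral_div, integral_const]
    simp [hg]
  have hZmem : ∀ l ω, 0 ≤ Z l ω ∧ Z l ω ≤ 1 := by
    intro l ω
    constructor <;> simp only [hZ] <;> nlinarith [hnn l ω, hle1 l ω]
  -- the sum S and its measurability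
  set S : Ω → ℝ := fun ω => ∑' l, Y l ω with hS
  have hSmeas : Measurable S := by
    have : S = fun ω => (∑' l, ENNReal.ofReal (Y l ω)).toReal := by
      funext ω; exact occ_tsum_eq_toReal (fun l => hnn l ω)
    rw [this]
    exact (Measurable.ennreal_tsum fun l => (hmeas l).ennreal_ofReal).ennreal_toReal
  have hSnn : ∀ ω, 0 ≤ S ω := fun ω => tsum_nonneg fun l => hnn l ω
  -- a.e. summability
  have hae : ∀ᵐ ω ∂P, Summable fun l => Y l ω := by
    have hlint : ∫⁻ ω, ∑' l, ENNReal.ofReal (Y l ω) ∂P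
        = ∑' l, ∫⁻ ω, ENNReal.ofReal (Y l ω) ∂P :=
      lintegral_tsum fun l => ((hmeas l).ennreal_ofReal).aemeasurable
    have heach : ∀ l, ∫⁻ ω, ENNReal.ofReal (Y l ω) ∂P = ENNReal.ofReal (g l) := by
      intro l
      rw [← ofReal_integral_eq_lintegral_ofReal (hYint l) (ae_of_all _ fun ω => hnn l ω)]
    have hfin : ∫⁻ ω, ∑' l, ENNReal.ofReal (Y l ω) ∂P < ⊤ := by
      rw [hlint]
      simp only [heach]
      rw [← ENNReal.ofReal_tsum_of_nonneg hgnn hsum]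
      exact ENNReal.ofReal_lt_top
    have := ae_lt_top (Measurable.ennreal_tsum fun l => (hmeas l).ennreal_ofReal) hfin.ne
    filter_upwards [this] with ω hω
    exact occ_summable_of_ne_top (fun l => hnn l ω) hω.ne
  -- the mgf-type function
  set F : Ω → ℝ := fun ω => Real.exp (-(Real.log 2) * S ω) with hF
  have hlog2 : (0:ℝ) < Real.log 2 := Real.log_pos one_lt_two
  have hFmeas : Measurable F := (Real.measurable_exp).comp (hSmeas.const_mul _)
  have hFle1 : ∀ ω, F ω ≤ 1 := by
    intro ω
    rw [hF]
    simp only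
    rw [← Real.exp_zero]
    apply Real.exp_le_exp.2
    nlinarith [hSnn ω, hlog2]
  have hFint : Integrable F P := by
    refine (integrable_const (1 : ℝ)).mono' hFmeas.aestronglyMeasurable ?_
    exact ae_of_all _ fun ω => by
      rw [Real.norm_eq_abs, abs_of_nonneg (Real.exp_nonneg _)]; exact hFle1 ω
  -- partial products
  have hprodZ : ∀ N, (Integrable (fun ω => ∏ l ∈ Finset.range N, Z l ω) P) ∧
      ∫ ω, ∏ l ∈ Finset.range N, Z l ω ∂P = ∏ l ∈ Finset.range N, (1 - g l / 2) := by
    intro N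
    obtain ⟨h1, h2⟩ := occ_integral_prod P Z hZind hZmeas hZint (Finset.range N)
    exact ⟨h1, by rw [h2]; exact Finset.prod_congr rfl fun l _ => hEZ l⟩
  -- pointwise identity : the partial product equals exp(-log 2 * partial sum)
  have hppt : ∀ N ω, ∏ l ∈ Finset.range N, Z l ω
      = Real.exp (-(Real.log 2) * ∑ l ∈ Finset.range N, Y l ω) := by
    intro N ω
    rw [Finset.mul_sum, Real.exp_sum]
    refine Finset.prod_congr rfl fun l _ => ?_
    rcases h01 l ω with h | h <;> rw [hZ] <;> simp only [h]
    · simp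
    · rw [mul_one, Real.exp_neg, Real.exp_log two_pos]; norm_num
  -- convergence of integrals by dominated convergence
  have hDCT : Tendsto (fun N => ∫ ω, ∏ l ∈ Finset.range N, Z l ω ∂P) atTop
      (nhds (∫ ω, F ω ∂P)) := by
    refine tendsto_integral_of_dominated_convergence (fun _ => (1 : ℝ))
      (fun N => (Finset.measurable_prod _ fun l _ => hZmeas l).aestronglyMeasurable)
      (integrable_const 1) (fun N => ae_of_all _ fun ω => ?_) ?_
    · rw [Real.norm_eq_abs, abs_of_nonneg (Finset.prod_nonneg fun l _ => (hZmem l ω).1)]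
      exact Finset.prod_le_one (fun l _ => (hZmem l ω).1) (fun l _ => (hZmem l ω).2)
    · filter_upwards [hae] with ω hω
      have h1 : Tendsto (fun N => ∑ l ∈ Finset.range N, Y l ω) atTop (nhds (S ω)) :=
        hω.hasSum.tendsto_sum_nat
      have h2 : Tendsto (fun N => Real.exp (-(Real.log 2) * ∑ l ∈ Finset.range N, Y l ω))
          atTop (nhds (F ω)) :=
        (Real.continuous_exp.tendsto _).comp (h1.const_mul _)
      exact h2.congr fun N => (hppt N ω).symm
  -- the bound on partial product integrals
  have hEbound : ∀ N, ∫ ω, ∏ l ∈ Finset.range N, Z l ω ∂P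
      ≤ Real.exp (-(∑ l ∈ Finset.range N, g l) / 2) := by
    intro N
    rw [(hprodZ N).2]
    calc ∏ l ∈ Finset.range N, (1 - g l / 2)
        ≤ ∏ l ∈ Finset.range N, Real.exp (-(g l / 2)) := by
          refine Finset.prod_le_prod (fun l _ => by nlinarith [hg1 l, hgnn l]) ?_
          intro l _
          have := Real.add_one_le_exp (-(g l / 2))
          linarith
      _ = Real.exp (-(∑ l ∈ Finset.range N, g l) / 2) := by
          rw [← Real.exp_sum]
          congr 1
          rw [neg_div, Finset.sum_div, ← Finset.sum_neg_distrib]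
  -- limit of the bound
  have hlimbound : Tendsto (fun N => Real.exp (-(∑ l ∈ Finset.range N, g l) / 2))
      atTop (nhds (Real.exp (-Φ / 2))) := by
    have h1 : Tendsto (fun N => ∑ l ∈ Finset.range N, g l) atTop (nhds Φ) := by
      rw [hΦ]; exact hsum.hasSum.tendsto_sum_nat
    exact (Real.continuous_exp.tendsto _).comp ((h1.neg).div_const 2)
  have hIF : ∫ ω, F ω ∂P ≤ Real.exp (-Φ / 2) :=
    le_of_tendsto_of_tendsto' hDCT hlimbound hEbound
  -- Markov
  have hmarkov := mul_meas_ge_le_integral_of_nonneg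
    (ae_of_all P fun ω => Real.exp_nonneg (-(Real.log 2) * S ω)) hFint
    (Real.exp (-(Real.log 2) * (Φ / 2)))
  have hsub : {ω | S ω ≤ Φ / 2} ⊆ {ω | Real.exp (-(Real.log 2) * (Φ / 2)) ≤ F ω} := by
    intro ω hω
    simp only [Set.mem_setOf_eq] at hω ⊢
    rw [hF]
    simp only
    apply Real.exp_le_exp.2
    nlinarith [hlog2]
  have hmono : (P {ω | S ω ≤ Φ / 2}).toReal
      ≤ (P {ω | Real.exp (-(Real.log 2) * (Φ / 2)) ≤ F ω}).toReal :=
    ENNReal.toReal_mono (measure_ne_top _ _) (measure_mono hsub)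
  have hεpos : (0:ℝ) < Real.exp (-(Real.log 2) * (Φ / 2)) := Real.exp_pos _
  have : Real.exp (-(Real.log 2) * (Φ / 2)) * (P {ω | S ω ≤ Φ / 2}).toReal
      ≤ Real.exp (-Φ / 2) := by
    calc Real.exp (-(Real.log 2) * (Φ / 2)) * (P {ω | S ω ≤ Φ / 2}).toReal
        ≤ Real.exp (-(Real.log 2) * (Φ / 2))
          * (P {ω | Real.exp (-(Real.log 2) * (Φ / 2)) ≤ F ω}).toReal := by
          exact mul_le_mul_of_nonneg_left hmono hεpos.le
      _ ≤ ∫ ω, F ω ∂P := hmarkov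
      _ ≤ Real.exp (-Φ / 2) := hIF
  have hfinal : (P {ω | S ω ≤ Φ / 2}).toReal
      ≤ Real.exp (-Φ / 2) / Real.exp (-(Real.log 2) * (Φ / 2)) := by
    rw [le_div_iff₀ hεpos]
    linarith [this]
  calc (P {ω | S ω ≤ Φ / 2}).toReal
      ≤ Real.exp (-Φ / 2) / Real.exp (-(Real.log 2) * (Φ / 2)) := hfinal
    _ = Real.exp (-((1 - Real.log 2) / 2) * Φ) := by
        rw [← Real.exp_sub]; ring_nf

lemma occ_ratio_as (Φ : ℕ → ℝ) (hΦpos : ∀ n, 0 < Φ n)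
    (hΦtop : Tendsto Φ atTop atTop) (K : ℕ → ℝ)
    (h : Tendsto (fun n => K n / Φ n) atTop (nhds 1)) (c : ℝ) :
    Tendsto (fun n => Φ n / max (K n + c) 1) atTop (nhds 1) := by
  have h0 : Tendsto (fun n => c / Φ n) atTop (nhds 0) :=
    Tendsto.div_atTop tendsto_const_nhds hΦtop
  have h3 : Tendsto (fun n => (K n + c) / Φ n) atTop (nhds 1) := by
    have := h.add h0
    rw [add_zero] at this
    exact this.congr fun n => (add_div _ _ _).symm
  have h4 : Tendsto (fun n => K n + c) atTop atTop := by
    have := Tendsto.pos_mul_atTop one_pos h3 hΦtop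
    refine this.congr fun n => ?_
    exact div_mul_cancel₀ _ (hΦpos n).ne'
  have h5 : ∀ᶠ n in atTop, (1:ℝ) ≤ K n + c := h4.eventually_ge_atTop 1
  have h6 : Tendsto (fun n => ((K n + c) / Φ n)⁻¹) atTop (nhds 1) := by
    have := h3.inv₀ one_ne_zero
    rw [inv_one] at this
    exact this
  refine h6.congr' ?_
  filter_upwards [h5] with n hn
  rw [inv_div, max_eq_left hn]

/-- For each `n`, let `K_n = ∑_ℓ B_{n,ℓ}` be a sum of independent `{0,1}`-valued random
variables with mean `Φ_n = E[K_n] ∈ (0,∞)`. Assume `Φ_n → ∞` and `K_n/Φ_n → 1` a.s.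
Then for every real `c`, `Φ_n / ((K_n + c) ∨ 1) → 1` almost surely and in `L^p` for
every `p ≥ 1`. -/
theorem occupancy_ratio_tendsto_one
    {Ω : Type*} [MeasurableSpace Ω] (P : Measure Ω) [IsProbabilityMeasure P]
    (B : ℕ → ℕ → Ω → ℝ) (hmeas : ∀ n l, Measurable (B n l))
    (h01 : ∀ n l ω, B n l ω = 0 ∨ B n l ω = 1)
    (hind : ∀ n, iIndepFun (B n) P)
    (hsum : ∀ n, Summable fun l => ∫ ω, B n l ω ∂P)
    (Φ : ℕ → ℝ) (hΦdef : ∀ n, Φ n = ∑' l, ∫ ω, B n l ω ∂P)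
    (hΦpos : ∀ n, 0 < Φ n) (hΦtop : Tendsto Φ atTop atTop)
    (K : ℕ → Ω → ℝ) (hKdef : ∀ n ω, K n ω = ∑' l, B n l ω)
    (hKas : ∀ᵐ ω ∂P, Tendsto (fun n => K n ω / Φ n) atTop (nhds 1))
    (c : ℝ) :
    (∀ᵐ ω ∂P, Tendsto (fun n => Φ n / max (K n ω + c) 1) atTop (nhds 1)) ∧
      (∀ p : ℝ, 1 ≤ p →
        Tendsto (fun n => ∫ ω, |Φ n / max (K n ω + c) 1 - 1| ^ p ∂P)
          atTop (nhds 0)) := by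
  have hnn : ∀ n l ω, 0 ≤ B n l ω := by
    intro n l ω; rcases h01 n l ω with h | h <;> rw [h] <;> norm_num
  have hKnn : ∀ n ω, 0 ≤ K n ω := fun n ω => by
    rw [hKdef]; exact tsum_nonneg fun l => hnn n l ω
  have hKmeas : ∀ n, Measurable (K n) := by
    intro n
    have heq : K n = fun ω => (∑' l, ENNReal.ofReal (B n l ω)).toReal := by
      funext ω; rw [hKdef]; exact occ_tsum_eq_toReal (fun l => hnn n l ω)
    rw [heq]
    exact (Measurable.ennreal_tsum fun l => (hmeas n l).ennreal_ofReal).ennreal_toReal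
  have hAS : ∀ᵐ ω ∂P, Tendsto (fun n => Φ n / max (K n ω + c) 1) atTop (nhds 1) := by
    filter_upwards [hKas] with ω hω
    exact occ_ratio_as Φ hΦpos hΦtop (fun n => K n ω) hω c
  refine ⟨hAS, fun p hp => ?_⟩
  have hppos : (0:ℝ) < p := lt_of_lt_of_le one_pos hp
  set δ : ℝ := (1 - Real.log 2) / 2 with hδ
  have hδpos : 0 < δ := by
    have h2 : Real.log 2 < 1 := lt_trans Real.log_two_lt_d9 (by norm_num)
    rw [hδ]; linarith
  set r : ℕ → Ω → ℝ := fun n ω => Φ n / max (K n ω + c) 1 with hrdef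
  have hmax_pos : ∀ n ω, (0:ℝ) < max (K n ω + c) 1 :=
    fun n ω => lt_of_lt_of_le one_pos (le_max_right _ _)
  have hr_nonneg : ∀ n ω, 0 ≤ r n ω :=
    fun n ω => div_nonneg (hΦpos n).le (hmax_pos n ω).le
  have hr_le : ∀ n ω, r n ω ≤ Φ n := fun n ω =>
    div_le_self (hΦpos n).le (le_max_right _ _)
  have habs_le : ∀ n ω, |r n ω - 1| ≤ Φ n + 1 := fun n ω =>
    abs_le.2 ⟨by linarith [hr_nonneg n ω, hΦpos n], by linarith [hr_le n ω]⟩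
  have hmin_nonneg : ∀ n ω, 0 ≤ min (|r n ω - 1|) 3 :=
    fun n ω => le_min (abs_nonneg _) (by norm_num)
  have hrmeas : ∀ n, Measurable (r n) :=
    fun n => measurable_const.div (((hKmeas n).add_const c).max measurable_const)
  have hcontp : Continuous (fun x : ℝ => x ^ p) := Real.continuous_rpow_const hppos.le
  have himeas : ∀ n, Measurable (fun ω => |r n ω - 1| ^ p) :=
    fun n => hcontp.measurable.comp ((hrmeas n).sub_const 1).abs
  have hminmeas : ∀ n, Measurable (fun ω => min (|r n ω - 1|) 3 ^ p) :=
    fun n => hcontp.measurable.comp (((hrmeas n).sub_const 1).abs.min measurable_const)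
  -- G term
  have hG : Tendsto (fun n => ∫ ω, min (|r n ω - 1|) 3 ^ p ∂P) atTop (nhds 0) := by
    have := tendsto_integral_of_dominated_convergence (μ := P)
      (F := fun n ω => min (|r n ω - 1|) 3 ^ p) (f := fun _ => (0:ℝ))
      (bound := fun _ => (3:ℝ) ^ p)
      (fun n => (hminmeas n).aestronglyMeasurable) (integrable_const _)
      (fun n => ae_of_all _ fun ω => ?_) ?_
    · simpa using this
    · rw [Real.norm_eq_abs, abs_of_nonneg (Real.rpow_nonneg (hmin_nonneg n ω) p)]
      exact Real.rpow_le_rpow (hmin_nonneg n ω) (min_le_right _ _) hppos.le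
    · filter_upwards [hAS] with ω hω
      have h1 : Tendsto (fun n => |r n ω - 1|) atTop (nhds 0) := by
        have := (hω.sub_const 1).abs
        simpa using this
      have h2 : Tendsto (fun n => min (|r n ω - 1|) 3) atTop (nhds 0) := by
        have := h1.min (tendsto_const_nhds (x := (3:ℝ)))
        simpa using this
      have h3 := h2.rpow_const (p := p) (Or.inr hppos.le)
      simpa [Real.zero_rpow hppos.ne'] using h3
  -- H term
  have hH : Tendsto (fun n => (Φ n + 1) ^ p * Real.exp (-δ * Φ n)) atTop (nhds 0) := by
    have h1 : Tendsto (fun x : ℝ => x ^ p * Real.exp (-δ * x)) atTop (nhds 0) :=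
      tendsto_rpow_mul_exp_neg_mul_atTop_nhds_zero p δ hδpos
    have h2 : Tendsto (fun n => Φ n + 1) atTop atTop :=
      tendsto_atTop_add_const_right _ 1 hΦtop
    have h3 := (h1.comp h2).const_mul (Real.exp δ)
    rw [mul_zero] at h3
    refine h3.congr fun n => ?_
    simp only [Function.comp]
    rw [show Real.exp δ * ((Φ n + 1) ^ p * Real.exp (-δ * (Φ n + 1)))
        = (Φ n + 1) ^ p * (Real.exp δ * Real.exp (-δ * (Φ n + 1))) from by ring,
      ← Real.exp_add, show δ + -δ * (Φ n + 1) = -δ * Φ n from by ring]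
  -- tail bounds
  have htail : ∀ n, (P {ω | K n ω ≤ Φ n / 2}).toReal ≤ Real.exp (-δ * Φ n) := by
    intro n
    have hset : {ω | K n ω ≤ Φ n / 2} = {ω | (∑' l, B n l ω) ≤ Φ n / 2} := by
      ext ω; simp [hKdef]
    rw [hset, hδ]
    exact occ_tail_bound P (B n) (hmeas n) (h01 n) (hind n) (hsum n) (Φ n) (hΦdef n)
  -- eventual comparison
  have hΦbig : ∀ᶠ n in atTop, 4 * (|c| + 1) ≤ Φ n := hΦtop.eventually_ge_atTop _
  have hbound : ∀ᶠ n in atTop, ∫ ω, |r n ω - 1| ^ p ∂P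
      ≤ (∫ ω, min (|r n ω - 1|) 3 ^ p ∂P) + (Φ n + 1) ^ p * Real.exp (-δ * Φ n) := by
    filter_upwards [hΦbig] with n hn
    set bad := {ω | K n ω ≤ Φ n / 2} with hbad
    have hbadmeas : MeasurableSet bad := measurableSet_le (hKmeas n) measurable_const
    have hpt : ∀ ω, |r n ω - 1| ^ p
        ≤ min (|r n ω - 1|) 3 ^ p + Set.indicator bad (fun _ => (Φ n + 1) ^ p) ω := by
      intro ω
      by_cases hω : ω ∈ bad
      · have hb1 : |r n ω - 1| ^ p ≤ (Φ n + 1) ^ p :=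
          Real.rpow_le_rpow (abs_nonneg _) (habs_le n ω) hppos.le
        have hb2 : 0 ≤ min (|r n ω - 1|) 3 ^ p := Real.rpow_nonneg (hmin_nonneg n ω) p
        rw [Set.indicator_of_mem hω]
        linarith
      · have hK : Φ n / 2 < K n ω := lt_of_not_ge hω
        have hcb : |c| + 1 ≤ Φ n / 4 := by linarith
        have hca := neg_abs_le c
        have h1le : (1:ℝ) ≤ K n ω + c := by nlinarith [abs_nonneg c]
        have hmax : max (K n ω + c) 1 = K n ω + c := max_eq_left h1le
        have hr4 : r n ω ≤ 4 := by
          rw [hrdef]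
          simp only
          rw [hmax, div_le_iff₀ (by linarith : (0:ℝ) < K n ω + c)]
          linarith
        have habs3 : |r n ω - 1| ≤ 3 :=
          abs_le.2 ⟨by linarith [hr_nonneg n ω], by linarith⟩
        rw [min_eq_left habs3, Set.indicator_of_notMem hω, add_zero]
    have hint1 : Integrable (fun ω => |r n ω - 1| ^ p) P := by
      refine (integrable_const ((Φ n + 1) ^ p)).mono'
        (himeas n).aestronglyMeasurable (ae_of_all _ fun ω => ?_)
      rw [Real.norm_eq_abs, abs_of_nonneg (Real.rpow_nonneg (abs_nonneg _) p)]
      exact Real.rpow_le_rpow (abs_nonneg _) (habs_le n ω) hppos.le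
    have hint2 : Integrable (fun ω => min (|r n ω - 1|) 3 ^ p) P := by
      refine (integrable_const ((3:ℝ) ^ p)).mono'
        (hminmeas n).aestronglyMeasurable (ae_of_all _ fun ω => ?_)
      rw [Real.norm_eq_abs, abs_of_nonneg (Real.rpow_nonneg (hmin_nonneg n ω) p)]
      exact Real.rpow_le_rpow (hmin_nonneg n ω) (min_le_right _ _) hppos.le
    have hint3 : Integrable (Set.indicator bad fun _ => (Φ n + 1) ^ p) P :=
      (integrable_const _).indicator hbadmeas
    calc ∫ ω, |r n ω - 1| ^ p ∂P
        ≤ ∫ ω, (min (|r n ω - 1|) 3 ^ p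
            + Set.indicator bad (fun _ => (Φ n + 1) ^ p) ω) ∂P :=
          integral_mono hint1 (hint2.add hint3) hpt
      _ = (∫ ω, min (|r n ω - 1|) 3 ^ p ∂P)
            + ∫ ω, Set.indicator bad (fun _ => (Φ n + 1) ^ p) ω ∂P :=
          integral_add hint2 hint3
      _ = (∫ ω, min (|r n ω - 1|) 3 ^ p ∂P) + (P bad).toReal * (Φ n + 1) ^ p := by
          rw [integral_indicator_const _ hbadmeas]; simp [smul_eq_mul, measureReal_def]
      _ ≤ (∫ ω, min (|r n ω - 1|) 3 ^ p ∂P) + (Φ n + 1) ^ p * Real.exp (-δ * Φ n) := by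
          have := htail n
          have hnn2 : (0:ℝ) ≤ (Φ n + 1) ^ p := Real.rpow_nonneg (by linarith [hΦpos n]) p
          have : (P bad).toReal * (Φ n + 1) ^ p ≤ (Φ n + 1) ^ p * Real.exp (-δ * Φ n) := by
            rw [mul_comm]
            exact mul_le_mul_of_nonneg_left (htail n) hnn2
          linarith
  -- squeeze
  have hGH := hG.add hH
  rw [add_zero] at hGH
  refine tendsto_of_tendsto_of_tendsto_of_le_of_le'
    (tendsto_const_nhds (x := (0:ℝ))) hGH ?_ hbound
  exact Eventually.of_forall fun n =>
    integral_nonneg fun ω => Real.rpow_nonneg (abs_nonneg _) p
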